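/- Let D be a strongly connected digraph with chromatic number at least 4. Then D contains a subdivision of B(2,1;1): there exist vertices x, y and three pairwise internally disjoint directed paths, two from x to y of lengths at least 2 and at least 1 respectively, and one from y to x of length at least 1. -/

import Mathlib

universe u

section Defs
variable {V : Type u}

/-- `l` is a directed path from `x` to `y` in the digraph with arc relation `A`. -/
def DiPath (A : V → V → Prop) (x y : V) (l : List V) : Prop :=
  l.Chain' A ∧ l.Nodup ∧ l.head? = some x ∧ l.getLast? = some y

/-- The internal vertices of a path given as a list. -/
def internals (l : List V) : List V := l.tail.dropLast

/-- `(a,b)` is an arc of the directed cycle represented by the list `l`. -/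
def cycArc (l : List V) (a b : V) : Prop :=
  (a, b) ∈ l.zip l.tail ∨ (l.getLast? = some a ∧ l.head? = some b)

/-- `l` represents a directed cycle of the digraph with arc relation `A`;
its length (number of arcs = number of vertices) is `l.length`. -/
def DiCycle (A : V → V → Prop) (l : List V) : Prop :=
  l ≠ [] ∧ l.Chain' A ∧ l.Nodup ∧
    ∀ a b, l.getLast? = some a → l.head? = some b → A a b

/-- A digraph is strongly connected. -/
def StrongConn (A : V → V → Prop) : Prop := ∀ x y : V, ∃ l, DiPath A x y l

/-- The chromatic number of a digraph: that of its underlying undirected graph. -/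
noncomputable def dchrom (A : V → V → Prop) : ℕ∞ :=
  (SimpleGraph.fromRel A).chromaticNumber

/-- Two paths are internally disjoint. -/
def IntDisj (P Q : List V) : Prop :=
  (∀ v ∈ internals P, v ∉ internals Q) ∧ (∀ v ∈ internals Q, v ∉ internals P)

/-- `D` contains a subdivision of the bispindle `B(k1,k2;k3)`: vertices `x`, `y`
and three pairwise internally disjoint dipaths, two from `x` to `y` of lengths
at least `k1` and `k2`, and one from `y` to `x` of length at least `k3`. -/
def SubdivB (A : V → V → Prop) (k1 k2 k3 : ℕ) : Prop :=
  ∃ (x y : V) (P1 P2 P3 : List V),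
    DiPath A x y P1 ∧ DiPath A x y P2 ∧ DiPath A y x P3 ∧
    k1 + 1 ≤ P1.length ∧ k2 + 1 ≤ P2.length ∧ k3 + 1 ≤ P3.length ∧
    P1 ≠ P2 ∧ IntDisj P1 P2 ∧ IntDisj P1 P3 ∧ IntDisj P2 P3

/-- The length of the subpath of the cycle `l` from `a` to `b` (number of arcs). -/
def cycDist [DecidableEq V] (l : List V) (a b : V) : ℕ :=
  (l.rotate (l.idxOf a)).idxOf b

/-- The subpath (vertex list) of the cycle `l` from `a` to `b`. -/
def cycSub [DecidableEq V] (l : List V) (a b : V) : List V :=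
  (l.rotate (l.idxOf a)).take (cycDist l a b + 1)

/-- The intersection of the cycles `Ci` and `Cj` is the common directed subpath
from `a` to `b`, having at most `k` vertices. -/
def InterPath [DecidableEq V] (k : ℕ) (Ci Cj : List V) (a b : V) : Prop :=
  a ∈ Ci ∧ b ∈ Cj ∧ (∀ x, (x ∈ Ci ∧ x ∈ Cj) ↔ x ∈ cycSub Ci a b) ∧
  cycSub Ci a b = cycSub Cj a b ∧ (cycSub Ci a b).length ≤ k

/-- A `k`-suitable collection of directed cycles: all cycles have length at least `8k`
and any two distinct cycles intersect on a directed subpath of at most `k` vertices. -/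
def Suitable [DecidableEq V] (A : V → V → Prop) (k : ℕ) (𝒞 : Set (List V)) : Prop :=
  (∀ C ∈ 𝒞, DiCycle A C ∧ 8 * k ≤ C.length) ∧
  ∀ C ∈ 𝒞, ∀ C' ∈ 𝒞, C ≠ C' → (∃ x, x ∈ C ∧ x ∈ C') → ∃ a b, InterPath k C C' a b

/-- Adjacency in the intersection graph of a collection of cycles. -/
def interRel (𝒞 : Set (List V)) : List V → List V → Prop :=
  fun C C' => C ∈ 𝒞 ∧ C' ∈ 𝒞 ∧ ∃ x, x ∈ C ∧ x ∈ C'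

/-- `(a,b)` is an arc of the union of the cycles of `𝒞`. -/
def unionArc (𝒞 : Set (List V)) (a b : V) : Prop := ∃ C ∈ 𝒞, cycArc C a b

/-- A graph is 2-connected. -/
def TwoConnectedG {W : Type*} (G : SimpleGraph W) : Prop :=
  G.Connected ∧ ∀ w : W, (G.induce {u | u ≠ w}).Connected

end Defs

section Aux
open Classical
variable {V : Type u} {A : V → V → Prop}

lemma dp_ne_nil {x y : V} {l : List V} (h : DiPath A x y l) : l ≠ [] := by
  rintro rfl; simp [DiPath] at h

lemma dp_head_mem {x y : V} {l : List V} (h : DiPath A x y l) : x ∈ l :=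
  List.mem_of_mem_head? (by rw [h.2.2.1]; rfl)

lemma dp_last_mem {x y : V} {l : List V} (h : DiPath A x y l) : y ∈ l :=
  List.mem_of_mem_getLast? (by rw [h.2.2.2]; rfl)

lemma dp_singleton (z : V) : DiPath A z z [z] := by
  simp [DiPath, List.Chain']

lemma dp_arc {u v : V} (h : A u v) (huv : u ≠ v) : DiPath A u v [u, v] := by
  simp [DiPath, List.Chain', h, huv]

lemma dp_shape {x y : V} {l : List V} (h : DiPath A x y l) (hxy : x ≠ y) :
    ∃ mid, l = x :: (mid ++ [y]) := by
  obtain ⟨hc, hn, hh, hl⟩ := h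
  have hne : l ≠ [] := by rintro rfl; simp at hh
  obtain ⟨a, t, rfl⟩ := List.exists_cons_of_ne_nil hne
  have hax : x = a := (by simpa using hh : a = x).symm
  subst hax
  rcases t.eq_nil_or_concat with rfl | ⟨mid, b, rfl⟩
  · simp only [List.getLast?_singleton, Option.some.injEq] at hl
    exact absurd hl hxy
  · refine ⟨mid, ?_⟩
    rw [List.concat_eq_append] at hl ⊢
    have hb : (x :: (mid ++ [b])).getLast? = some b := by
      rw [List.getLast?_eq_getLast (by simp)]
      simp [List.getLast_append]
    rw [hb] at hl
    have hby : y = b := (by simpa using hl : b = y).symm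
    subst hby
    rfl

lemma dp_eq_singleton {x : V} {l : List V} (h : DiPath A x x l) : l = [x] := by
  obtain ⟨hc, hn, hh, hl⟩ := h
  have hne : l ≠ [] := by rintro rfl; simp at hh
  obtain ⟨a, t, rfl⟩ := List.exists_cons_of_ne_nil hne
  have hax : x = a := (by simpa using hh : a = x).symm
  subst hax
  rcases t.eq_nil_or_concat with rfl | ⟨mid, b, rfl⟩
  · rfl
  · exfalso
    rw [List.concat_eq_append] at hl hn
    have hb : (x :: (mid ++ [b])).getLast? = some b := by
      rw [List.getLast?_eq_getLast (by simp)]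
      simp [List.getLast_append]
    rw [hb] at hl
    have hbx : b = x := by simpa using hl
    rw [hbx] at hn
    simp at hn

lemma dp_length_ge {x y : V} {l : List V} (h : DiPath A x y l) (hxy : x ≠ y) :
    2 ≤ l.length := by
  obtain ⟨mid, rfl⟩ := dp_shape h hxy
  simp

lemma internals_subset {l : List V} {z : V} (h : z ∈ internals l) : z ∈ l :=
  (l.tail_sublist).subset ((l.tail.dropLast_sublist).subset h)

lemma mem_internals {x y : V} {l : List V} (h : DiPath A x y l) {z : V} :
    z ∈ internals l ↔ z ∈ l ∧ z ≠ x ∧ z ≠ y := by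
  by_cases hxy : x = y
  · subst hxy
    rw [dp_eq_singleton h]
    simp [internals]
  · obtain ⟨mid, rfl⟩ := dp_shape h hxy
    have hn := h.2.1
    simp only [List.nodup_cons, List.nodup_append', List.mem_append,
      List.mem_singleton, List.nodup_singleton, List.disjoint_singleton] at hn
    obtain ⟨hx, hm, -, hy⟩ := hn
    simp only [internals, List.tail_cons, List.dropLast_concat]
    constructor
    · intro hz
      refine ⟨by simp [hz], ?_, ?_⟩
      · rintro rfl; exact hx (Or.inl hz)
      · rintro rfl; exact hy hz
    · rintro ⟨hz, hzx, hzy⟩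
      simp only [List.mem_cons, List.mem_append, List.mem_singleton] at hz
      tauto

lemma exists_first_split {Q : V → Prop} :
    ∀ {l : List V}, (∃ w ∈ l, Q w) →
      ∃ l1 w l2, l = l1 ++ w :: l2 ∧ Q w ∧ ∀ z ∈ l1, ¬ Q z := by
  intro l
  induction l with
  | nil => rintro ⟨w, h, -⟩; simp at h
  | cons a t ih =>
    intro h
    by_cases hQ : Q a
    · exact ⟨[], a, t, rfl, hQ, by simp⟩
    · obtain ⟨w, hw, hQw⟩ := h
      have hwt : w ∈ t := by
        rcases List.mem_cons.1 hw with rfl | h'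
        · exact absurd hQw hQ
        · exact h'
      obtain ⟨l1, w', l2, rfl, h1, h2⟩ := ih ⟨w, hwt, hQw⟩
      refine ⟨a :: l1, w', l2, rfl, h1, ?_⟩
      rintro z hz
      rcases List.mem_cons.1 hz with rfl | hz'
      · exact hQ
      · exact h2 z hz'

lemma dp_splice {x y z : V} {p q : List V} (hp : DiPath A x y p) (hq : DiPath A y z q) :
    ∃ r w, DiPath A x z r ∧ w ∈ r ∧ w ∈ p ∧ w ∈ q ∧ ∀ u ∈ r, u ∈ p ∨ u ∈ q := by
  obtain ⟨p1, w, p2, hpe, hwq, hp1⟩ :=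
    exists_first_split (Q := fun u => u ∈ q) ⟨y, dp_last_mem hp, dp_head_mem hq⟩
  obtain ⟨q1, q2, hqe⟩ := List.append_of_mem hwq
  have hcp := hp.1; rw [hpe, List.Chain', List.isChain_append] at hcp
  have hcq := hq.1; rw [hqe] at hcq
  have hwq2 : List.Chain' A (w :: q2) := hcq.infix (List.IsSuffix.isInfix ⟨q1, rfl⟩)
  have hnp := hp.2.1; rw [hpe, List.nodup_append'] at hnp
  have hnq := hq.2.1; rw [hqe, List.nodup_append'] at hnq
  refine ⟨p1 ++ w :: q2, w, ⟨?_, ?_, ?_, ?_⟩, by simp, by rw [hpe]; simp, hwq, ?_⟩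
  · rw [List.Chain', List.isChain_append]
    exact ⟨hcp.1, hwq2, by simpa using hcp.2.2⟩
  · rw [List.nodup_append']
    refine ⟨hnp.1, hnq.2.1, fun u hu hu' => hp1 u hu ?_⟩
    rw [hqe]; simp only [List.mem_append]
    rcases List.mem_cons.1 hu' with rfl | h'
    · right; simp
    · right; simp [h']
  · have h1 : p.head? = some x := hp.2.2.1
    rw [hpe] at h1
    rw [List.head?_append] at h1 ⊢
    simpa using h1
  · have h2 : q.getLast? = some z := hq.2.2.2
    rw [hqe, List.getLast?_append] at h2
    rw [List.getLast?_append]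
    have : (w :: q2).getLast? = some ((w :: q2).getLast (by simp)) :=
      List.getLast?_eq_getLast (by simp)
    rw [this] at h2 ⊢
    simpa using h2
  · intro u hu
    rcases List.mem_append.1 hu with h' | h'
    · left; rw [hpe]; simp [h']
    · right; rw [hqe]
      rcases List.mem_cons.1 h' with rfl | h''
      · simp
      · simp [h'']

/-- A directed cycle list: length at least 2, chain, nodup, wrap-around arc. -/
def CycL (A : V → V → Prop) (c : List V) : Prop :=
  2 ≤ c.length ∧ c.Chain' A ∧ c.Nodup ∧
    ∀ a b, c.getLast? = some a → c.head? = some b → A a b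

/-- `v` immediately follows `u` in the cyclic order of `c`. -/
def ConsecC (c : List V) (u v : V) : Prop :=
  (∃ l1 l2, c = l1 ++ u :: v :: l2) ∨ (c.getLast? = some u ∧ c.head? = some v)

lemma internals_mid {a b : V} {l : List V} : internals (a :: (l ++ [b])) = l := by
  simp [internals, List.dropLast_concat]

lemma cycl_rotate_one {c : List V} (h : CycL A c) : CycL A (c.rotate 1) := by
  obtain ⟨hlen, hch, hnd, hwrap⟩ := h
  obtain ⟨a, l, rfl⟩ := List.exists_cons_of_ne_nil (l := c) (by rintro rfl; simp at hlen)
  obtain ⟨b, l', rfl⟩ := List.exists_cons_of_ne_nil (l := l) (by rintro rfl; simp at hlen)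
  have hrot : (a :: b :: l').rotate 1 = (b :: l') ++ [a] := by
    simpa using List.rotate_cons_succ (b :: l') a 0
  rw [hrot]
  refine ⟨by simp, ?_, ?_, ?_⟩
  · rw [List.Chain', List.isChain_append]
    refine ⟨hch.tail, List.isChain_singleton a, ?_⟩
    intro p hp q hq
    obtain rfl : a = q := by simpa using hq
    refine hwrap p a ?_ rfl
    rw [List.getLast?_cons_cons]
    exact hp
  · rw [List.nodup_append', List.disjoint_singleton]
    exact ⟨(List.nodup_cons.1 hnd).2, List.nodup_singleton a, (List.nodup_cons.1 hnd).1⟩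
  · intro p q hp hq
    obtain rfl : a = p := by
      rw [List.getLast?_concat] at hp; simpa using hp
    obtain rfl : b = q := by
      rw [List.head?_append] at hq; simpa using hq
    exact (List.isChain_cons_cons.1 hch).1

lemma cycl_rotate {c : List V} (h : CycL A c) (n : ℕ) : CycL A (c.rotate n) := by
  induction n with
  | zero => simpa using h
  | succ n ih =>
    rw [← List.rotate_rotate]
    exact cycl_rotate_one ih

lemma consec_rotate_one {c : List V} {u v : V} (hlen : 2 ≤ c.length)
    (h : ConsecC c u v) : ConsecC (c.rotate 1) u v := by
  rcases h with ⟨l1, l2, rfl⟩ | ⟨h1, h2⟩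
  · rcases l1 with _ | ⟨a, l1'⟩
    · right
      have hrot : ([] ++ u :: v :: l2).rotate 1 = (v :: l2) ++ [u] := by
        simpa using List.rotate_cons_succ (v :: l2) u 0
      rw [hrot]
      constructor
      · rw [List.getLast?_concat]
      · rw [List.head?_append]; rfl
    · left
      have hrot : ((a :: l1') ++ u :: v :: l2).rotate 1 = (l1' ++ u :: v :: l2) ++ [a] := by
        simpa using List.rotate_cons_succ (l1' ++ u :: v :: l2) a 0
      refine ⟨l1', l2 ++ [a], ?_⟩
      rw [hrot]; simp
  · obtain ⟨a, t, rfl⟩ := List.exists_cons_of_ne_nil (l := c) (by rintro rfl; simp at hlen)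
    obtain rfl : v = a := (by simpa using h2 : a = v).symm
    have ht : t ≠ [] := by rintro rfl; simp at hlen
    obtain ⟨b, t2, rfl⟩ := List.exists_cons_of_ne_nil ht
    rw [List.getLast?_cons_cons] at h1
    obtain ⟨t', ht'⟩ : ∃ t', b :: t2 = t' ++ [u] :=
      ⟨(b :: t2).dropLast, (List.dropLast_append_getLast? u h1).symm⟩
    left
    refine ⟨t', [], ?_⟩
    rw [ht']
    have hrot : (v :: (t' ++ [u])).rotate 1 = (t' ++ [u]) ++ [v] := by
      simpa using List.rotate_cons_succ (t' ++ [u]) v 0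
    rw [hrot]; simp
    
lemma consec_rotate {c : List V} {u v : V} (hlen : 2 ≤ c.length)
    (h : ConsecC c u v) (n : ℕ) : ConsecC (c.rotate n) u v := by
  induction n with
  | zero => simpa using h
  | succ n ih =>
    rw [← List.rotate_rotate]
    exact consec_rotate_one (by rw [List.length_rotate]; exact hlen) ih

lemma consec_unrotate {c : List V} {u v : V} {k : ℕ} (hk : k ≤ c.length)
    (hlen : 2 ≤ c.length) (h : ConsecC (c.rotate k) u v) : ConsecC c u v := by
  have h2 := consec_rotate (by rw [List.length_rotate]; exact hlen) h (c.length - k)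
  rw [List.rotate_rotate, Nat.add_sub_cancel' hk, List.rotate_length] at h2
  exact h2

lemma cyc_split {c : List V} (hc : CycL A c) {u v : V} (hu : u ∈ c) (hv : v ∈ c)
    (huv : u ≠ v) :
    ∃ r1 r2 : List V, DiPath A u v (u :: (r1 ++ [v])) ∧ DiPath A v u (v :: (r2 ++ [u])) ∧
      (∀ z ∈ r1, z ∈ c) ∧ (∀ z ∈ r2, z ∈ c) ∧ (∀ z ∈ r1, z ∉ r2) ∧
      (r1 = [] → ConsecC c u v) := by
  classical
  set k := c.idxOf u with hkdef
  have hk : k < c.length := List.idxOf_lt_length_iff.2 hu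
  have hcy' : CycL A (c.rotate k) := cycl_rotate hc k
  have hhead : (c.rotate k).head? = some u := by
    rw [List.head?_rotate hk, List.getElem?_eq_getElem hk, List.getElem_idxOf hk]
  obtain ⟨a, rest, hrest⟩ := List.exists_cons_of_ne_nil (l := c.rotate k)
    (by intro h0; rw [h0] at hhead; simp at hhead)
  obtain rfl : u = a := by
    rw [hrest] at hhead
    exact (by simpa using hhead : a = u).symm
  have hvmem : v ∈ rest := by
    have : v ∈ c.rotate k := List.mem_rotate.2 hv
    rw [hrest] at this
    rcases List.mem_cons.1 this with h' | h'
    · exact absurd h' huv.symm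
    · exact h'
  obtain ⟨r1, r2, hsplit⟩ := List.append_of_mem hvmem
  have hceq : c.rotate k = (u :: r1) ++ (v :: r2) := by rw [hrest, hsplit]; simp
  have hch := hcy'.2.1
  rw [hceq, List.Chain', List.isChain_append] at hch
  obtain ⟨hch1, hch2, hlink⟩ := hch
  have hnd := hcy'.2.2.1
  rw [hceq, List.nodup_append'] at hnd
  obtain ⟨hnd1, hnd2, hdisj⟩ := hnd
  have hlast' : (c.rotate k).getLast? = (v :: r2).getLast? := by
    rw [hceq, List.getLast?_append]
    rw [List.getLast?_eq_getLast (by simp)]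
    rfl
  have hwrap := hcy'.2.2.2
  have hmemc : ∀ z, z ∈ (u :: r1) ++ (v :: r2) → z ∈ c := by
    intro z hz
    rw [← hceq] at hz
    exact List.mem_rotate.1 hz
  refine ⟨r1, r2, ⟨?_, ?_, ?_, ?_⟩, ⟨?_, ?_, ?_, ?_⟩, ?_, ?_, ?_, ?_⟩
  · show List.Chain' A ((u :: r1) ++ [v])
    rw [List.Chain', List.isChain_append]
    refine ⟨hch1, List.isChain_singleton v, ?_⟩
    intro p hp q hq
    obtain rfl : v = q := by simpa using hq
    exact hlink p hp v rfl
  · show ((u :: r1) ++ [v]).Nodup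
    rw [List.nodup_append', List.disjoint_singleton]
    exact ⟨hnd1, List.nodup_singleton v, fun h' => hdisj h' (by simp)⟩
  · show ((u :: r1) ++ [v]).head? = some u
    rw [List.head?_append]; rfl
  · show ((u :: r1) ++ [v]).getLast? = some v
    rw [List.getLast?_concat]
  · show List.Chain' A ((v :: r2) ++ [u])
    rw [List.Chain', List.isChain_append]
    refine ⟨hch2, List.isChain_singleton u, ?_⟩
    intro p hp q hq
    obtain rfl : u = q := by simpa using hq
    refine hwrap p u ?_ hhead
    rw [hlast']; exact hp
  · show ((v :: r2) ++ [u]).Nodup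
    rw [List.nodup_append', List.disjoint_singleton]
    refine ⟨hnd2, List.nodup_singleton u, fun h' => ?_⟩
    exact hdisj (show u ∈ u :: r1 by simp) h'
  · show ((v :: r2) ++ [u]).head? = some v
    rw [List.head?_append]; rfl
  · show ((v :: r2) ++ [u]).getLast? = some u
    rw [List.getLast?_concat]
  · intro z hz; exact hmemc z (by simp [hz])
  · intro z hz; exact hmemc z (by simp [hz])
  · intro z hz hz2
    have := hnd1
    have h1 : z ∈ u :: r1 := by simp [hz]
    have h2 : z ∈ v :: r2 := by simp [hz2]
    exact hdisj h1 h2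
  · rintro rfl
    have hcc : ConsecC (c.rotate k) u v := Or.inl ⟨[], r2, by rw [hceq]; simp⟩
    exact consec_unrotate (le_of_lt hk) hc.1 hcc

lemma master {c : List V} (hB : ¬ SubdivB A 2 1 1) (hc : CycL A c) {u v : V} {r : List V}
    (hu : u ∈ c) (hv : v ∈ c) (huv : u ≠ v)
    (hr : DiPath A u v r) (hint : ∀ z ∈ internals r, z ∉ c) :
    r = [u, v] ∧ ConsecC c u v := by
  obtain ⟨r1, r2, hseg1, hseg2, hr1c, hr2c, hdisj12, hconsec⟩ := cyc_split hc hu hv huv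
  obtain ⟨mid, rfl⟩ := dp_shape hr huv
  have hintr : internals (u :: (mid ++ [v])) = mid := internals_mid
  have hint1 : internals (u :: (r1 ++ [v])) = r1 := internals_mid
  have hint2 : internals (v :: (r2 ++ [u])) = r2 := internals_mid
  rcases List.eq_nil_or_concat' mid with rfl | hmid
  · -- r = [u, v]
    refine ⟨by simp, ?_⟩
    rcases eq_or_ne r1 [] with rfl | hr1ne
    · exact hconsec rfl
    · exfalso
      apply hB
      have harc : A u v := by
        have := hr.1; simp [List.Chain'] at this; exact this
      refine ⟨u, v, u :: (r1 ++ [v]), [u, v], v :: (r2 ++ [u]),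
        hseg1, dp_arc harc huv, hseg2, ?_, by simp, by simp, ?_, ?_, ?_, ?_⟩
      · have : r1.length ≠ 0 := fun h' => hr1ne (List.length_eq_zero_iff.1 h')
        simp; omega
      · intro h'
        apply hr1ne
        have hlen' := congrArg List.length h'
        simp only [List.length_cons, List.length_append, List.length_singleton] at hlen'
        exact List.eq_nil_of_length_eq_zero (by omega)
      · constructor
        · intro z hz; rw [hint1] at hz; simp [internals]
        · intro z hz; simp [internals] at hz
      · constructor
        · intro z hz h2
          rw [hint1] at hz; rw [hint2] at h2
          exact hdisj12 z hz h2
        · intro z hz h2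
          rw [hint1] at h2; rw [hint2] at hz
          exact hdisj12 z h2 hz
      · constructor
        · intro z hz; simp [internals] at hz
        · intro z hz; simp [internals]
  · -- r has an internal vertex: build the bispindle
    exfalso
    apply hB
    obtain ⟨mid', m, rfl⟩ := hmid
    refine ⟨u, v, u :: ((mid' ++ [m]) ++ [v]), u :: (r1 ++ [v]), v :: (r2 ++ [u]),
      hr, hseg1, hseg2, by simp, by simp, by simp, ?_, ?_, ?_, ?_⟩
    · intro h'
      have hm : m ∈ internals (u :: ((mid' ++ [m]) ++ [v])) := by
        rw [internals_mid]; simp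
      have hmnc : m ∉ c := hint m hm
      have : m ∈ c := by
        have hm2 : m ∈ internals (u :: (r1 ++ [v])) := by rw [← h']; exact hm
        rw [hint1] at hm2
        exact hr1c m hm2
      exact hmnc this
    · constructor
      · intro z hz h2
        rw [hint1] at h2
        exact hint z hz (hr1c z h2)
      · intro z hz h2
        rw [hint1] at hz
        exact hint z h2 (hr1c z hz)
    · constructor
      · intro z hz h2
        rw [hint2] at h2
        exact hint z hz (hr2c z h2)
      · intro z hz h2
        rw [hint2] at hz
        exact hint z h2 (hr2c z hz)
    · constructor
      · intro z hz h2
        rw [hint1] at hz; rw [hint2] at h2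
        exact hdisj12 z hz h2
      · intro z hz h2
        rw [hint1] at h2; rw [hint2] at hz
        exact hdisj12 z h2 hz

lemma chord_consec {c : List V} (hB : ¬ SubdivB A 2 1 1) (hc : CycL A c) {u v : V}
    (hu : u ∈ c) (hv : v ∈ c) (huv : u ≠ v) (harc : A u v) : ConsecC c u v :=
  (master hB hc hu hv huv (dp_arc harc huv) (by intro z hz; simp [internals] at hz)).2


/-- `a` is an entry of `v` w.r.t. the cycle `c`. -/
def IsEntry (A : V → V → Prop) (c : List V) (v a : V) : Prop :=
  a ∈ c ∧ ∃ r, DiPath A a v r ∧ ∀ z ∈ r, z ∈ c → z = a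

/-- `b` is an exit of `v` w.r.t. the cycle `c`. -/
def IsExit (A : V → V → Prop) (c : List V) (v b : V) : Prop :=
  b ∈ c ∧ ∃ r, DiPath A v b r ∧ ∀ z ∈ r, z ∈ c → z = b

lemma exit_extract {c : List V} :
    ∀ {p : List V} {v b : V}, DiPath A v b p → (∃ z ∈ p, z ∈ c) →
      ∃ b' r, DiPath A v b' r ∧ b' ∈ c ∧ (∀ z ∈ r, z ∈ p) ∧ ∀ z ∈ r, z ∈ c → z = b' := by
  intro p
  induction p with
  | nil => intro v b hp _; exact absurd rfl (dp_ne_nil hp)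
  | cons a t ih =>
    intro v b hp hex
    obtain rfl : v = a := (by simpa using hp.2.2.1 : a = v).symm
    by_cases hvc : v ∈ c
    · refine ⟨v, [v], dp_singleton v, hvc, by simp, ?_⟩
      intro z hz _
      simpa using hz
    · have ht : t ≠ [] := by
        rintro rfl
        obtain ⟨z, hz, hzc⟩ := hex
        obtain rfl : z = v := by simpa using hz
        exact hvc hzc
      obtain ⟨w, t', rfl⟩ := List.exists_cons_of_ne_nil ht
      have htp : DiPath A w b (w :: t') := by
        refine ⟨hp.1.tail, (List.nodup_cons.1 hp.2.1).2, rfl, ?_⟩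
        have h2 := hp.2.2.2
        rw [List.getLast?_cons_cons] at h2
        exact h2
      have hex' : ∃ z ∈ w :: t', z ∈ c := by
        obtain ⟨z, hz, hzc⟩ := hex
        rcases List.mem_cons.1 hz with rfl | hz'
        · exact absurd hzc hvc
        · exact ⟨z, hz', hzc⟩
      obtain ⟨b', r, hr, hb', hsub, huniq⟩ := ih htp hex'
      have hvr : v ∉ r := fun h => (List.nodup_cons.1 hp.2.1).1 (hsub v h)
      have hrne : r ≠ [] := dp_ne_nil hr
      refine ⟨b', v :: r, ⟨?_, ?_, rfl, ?_⟩, hb', ?_, ?_⟩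
      · rw [List.Chain', List.isChain_cons]
        refine ⟨?_, hr.1⟩
        intro y hy
        rw [hr.2.2.1] at hy
        obtain rfl : w = y := by simpa using hy
        exact (List.isChain_cons_cons.1 hp.1).1
      · rw [List.nodup_cons]; exact ⟨hvr, hr.2.1⟩
      · rw [show v :: r = [v] ++ r from rfl, List.getLast?_append, hr.2.2.2]; rfl
      · intro z hz
        rcases List.mem_cons.1 hz with rfl | hz'
        · simp
        · exact List.mem_cons_of_mem _ (hsub z hz')
      · intro z hz hzc
        rcases List.mem_cons.1 hz with rfl | hz'
        · exact absurd hzc hvc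
        · exact huniq z hz' hzc

lemma entry_extract {c : List V} :
    ∀ {p : List V} {x v : V}, DiPath A x v p → (∃ z ∈ p, z ∈ c) →
      ∃ a r, DiPath A a v r ∧ a ∈ c ∧ (∀ z ∈ r, z ∈ p) ∧ ∀ z ∈ r, z ∈ c → z = a := by
  intro p
  induction p with
  | nil => intro x v hp _; exact absurd rfl (dp_ne_nil hp)
  | cons w t ih =>
    intro x v hp hex
    obtain rfl : x = w := (by simpa using hp.2.2.1 : w = x).symm
    by_cases htc : ∃ z ∈ t, z ∈ c
    · have ht : t ≠ [] := by rintro rfl; simp at htc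
      obtain ⟨w', t', rfl⟩ := List.exists_cons_of_ne_nil ht
      have htp : DiPath A w' v (w' :: t') := by
        refine ⟨hp.1.tail, (List.nodup_cons.1 hp.2.1).2, rfl, ?_⟩
        have h2 := hp.2.2.2
        rw [List.getLast?_cons_cons] at h2
        exact h2
      obtain ⟨a, r, hr, hac, hsub, huniq⟩ := ih htp htc
      exact ⟨a, r, hr, hac, fun z hz => List.mem_cons_of_mem _ (hsub z hz), huniq⟩
    · push_neg at htc
      have hxc : x ∈ c := by
        obtain ⟨z, hz, hzc⟩ := hex
        rcases List.mem_cons.1 hz with rfl | hz'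
        · exact hzc
        · exact absurd hzc (htc z hz')
      refine ⟨x, x :: t, hp, hxc, fun z hz => hz, ?_⟩
      intro z hz hzc
      rcases List.mem_cons.1 hz with rfl | hz'
      · rfl
      · exact absurd hzc (htc z hz')

lemma entry_eq_exit {c : List V} (hB : ¬ SubdivB A 2 1 1) (hc : CycL A c)
    {v a b : V} (ha : IsEntry A c v a) (hb : IsExit A c v b) : a = b := by
  obtain ⟨hac, p, hp, hpa⟩ := ha
  obtain ⟨hbc, q, hq, hqb⟩ := hb
  by_contra hab
  obtain ⟨r, w, hr, hwr, hwp, hwq, hrsub⟩ := dp_splice hp hq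
  have hint : ∀ z ∈ internals r, z ∉ c := by
    intro z hz hzc
    have hzr : z ∈ r := internals_subset hz
    have hz' := (mem_internals hr).1 hz
    rcases hrsub z hzr with h' | h'
    · exact hz'.2.1 (hpa z h' hzc)
    · exact hz'.2.2 (hqb z h' hzc)
  obtain ⟨hruv, -⟩ := master hB hc hac hbc hab hr hint
  rw [hruv] at hwr
  rcases List.mem_cons.1 hwr with rfl | hwr'
  · exact hab (hqb w hwq hac)
  · obtain rfl : w = b := by simpa using hwr'
    exact hab ((hpa w hwp hbc).symm)

lemma entry_exists {c : List V} (hstrong : StrongConn A) (hcne : c ≠ [])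
    {v : V} (hv : v ∉ c) : ∃ a, IsEntry A c v a := by
  obtain ⟨x0, t0, rfl⟩ := List.exists_cons_of_ne_nil hcne
  obtain ⟨p, hp⟩ := hstrong x0 v
  obtain ⟨a, r, hr, hac, -, huniq⟩ :=
    entry_extract (c := x0 :: t0) hp ⟨x0, dp_head_mem hp, by simp⟩
  exact ⟨a, hac, r, hr, huniq⟩

lemma exit_exists {c : List V} (hstrong : StrongConn A) (hcne : c ≠ [])
    {v : V} (hv : v ∉ c) : ∃ b, IsExit A c v b := by
  obtain ⟨x0, t0, rfl⟩ := List.exists_cons_of_ne_nil hcne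
  obtain ⟨p, hp⟩ := hstrong v x0
  obtain ⟨b, r, hr, hbc, -, huniq⟩ :=
    exit_extract (c := x0 :: t0) hp ⟨x0, dp_last_mem hp, by simp⟩
  exact ⟨b, hbc, r, hr, huniq⟩

lemma entry_unique {c : List V} (hB : ¬ SubdivB A 2 1 1) (hc : CycL A c)
    (hstrong : StrongConn A) {v a a' : V} (hv : v ∉ c)
    (h1 : IsEntry A c v a) (h2 : IsEntry A c v a') : a = a' := by
  have hcne : c ≠ [] := by intro h0; rw [h0] at hc; simp [CycL] at hc
  obtain ⟨b, hb⟩ := exit_exists hstrong hcne hv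
  rw [entry_eq_exit hB hc h1 hb, entry_eq_exit hB hc h2 hb]

lemma arc_entry {c : List V} {u v : V} (harc : A u v) (hu : u ∈ c) (hv : v ∉ c) :
    IsEntry A c v u := by
  have huv : u ≠ v := by rintro rfl; exact hv hu
  refine ⟨hu, [u, v], dp_arc harc huv, ?_⟩
  intro z hz hzc
  rcases List.mem_cons.1 hz with rfl | hz'
  · rfl
  · obtain rfl : z = v := by simpa using hz'
    exact absurd hzc hv

lemma arc_exit {c : List V} {u v : V} (harc : A u v) (hu : u ∉ c) (hv : v ∈ c) :
    IsExit A c u v := by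
  have huv : u ≠ v := by rintro rfl; exact hu hv
  refine ⟨hv, [u, v], dp_arc harc huv, ?_⟩
  intro z hz hzc
  rcases List.mem_cons.1 hz with rfl | hz'
  · exact absurd hzc hu
  · simpa using hz'

lemma arc_out_entry {c : List V} {u v a : V} (harc : A u v) (huv : u ≠ v)
    (hu : u ∉ c) (hv : v ∉ c) (ha : IsEntry A c u a) : IsEntry A c v a := by
  obtain ⟨hac, r, hr, huniq⟩ := ha
  obtain ⟨r', w, hr', hwr, hwp, hwq, hrsub⟩ := dp_splice hr (dp_arc harc huv)
  refine ⟨hac, r', hr', ?_⟩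
  intro z hz hzc
  rcases hrsub z hz with h' | h'
  · exact huniq z h' hzc
  · exfalso
    rcases List.mem_cons.1 h' with rfl | h''
    · exact hu hzc
    · obtain rfl : z = v := by simpa using h''
      exact hv hzc

lemma stay_lemma {c : List V} (hB : ¬ SubdivB A 2 1 1) (hc : CycL A c)
    (hstrong : StrongConn A) (att : V → V) (hatt : ∀ v, v ∉ c → IsEntry A c v (att v))
    {a : V} (ha : a ∈ c) {x y : V} {p : List V} (hp : DiPath A x y p)
    (hx : x = a ∨ (x ∉ c ∧ att x = a)) (hy : y = a ∨ (y ∉ c ∧ att y = a)) :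
    ∀ z ∈ p, z = a ∨ (z ∉ c ∧ att z = a) := by
  classical
  by_contra hcon
  simp only [not_forall] at hcon
  obtain ⟨z0, hz0p, hz0⟩ := hcon
  obtain ⟨p1, z, p2, hpe, hzbad, hp1good⟩ :=
    exists_first_split (Q := fun w => ¬ (w = a ∨ (w ∉ c ∧ att w = a))) ⟨z0, hz0p, hz0⟩
  have hzbad' : ¬ (z = a ∨ (z ∉ c ∧ att z = a)) := hzbad
  push_neg at hzbad'
  obtain ⟨hza, hzW⟩ := hzbad'
  have hp1ne : p1 ≠ [] := by
    rintro rfl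
    have hzx : z = x := by
      have h1 := hp.2.2.1
      rw [hpe] at h1
      simpa using h1
    rcases hx with h' | h'
    · exact hza (hzx ▸ h')
    · exact hzW (hzx ▸ h'.1) (hzx ▸ h'.2)
  obtain ⟨p1', w, rfl⟩ := List.eq_nil_or_concat' p1 |>.resolve_left hp1ne
  have hchain := hp.1
  rw [hpe, List.Chain', List.isChain_append] at hchain
  have hwlast : w ∈ (p1' ++ [w]).getLast? := by rw [List.getLast?_concat]; rfl
  have harc : A w z := hchain.2.2 w hwlast z rfl
  have hwgood : w = a ∨ (w ∉ c ∧ att w = a) := by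
    have := hp1good w (by simp)
    by_contra hcon2
    exact this hcon2
  have hnd := hp.2.1
  rw [hpe, List.nodup_append'] at hnd
  have hwz : w ≠ z := by
    intro h0
    exact hnd.2.2 (show w ∈ p1' ++ [w] by simp) (by simp [h0])
  rcases hwgood with hwa | ⟨hwc, hwa⟩
  · have hamem : a ∈ p1' ++ [w] := by simp [hwa]
    have harc' : A a z := by rw [← hwa]; exact harc
    by_cases hzc : z ∈ c
    · have hq : DiPath A z y (z :: p2) := by
        refine ⟨hchain.2.1, hnd.2.1, rfl, ?_⟩
        have h2 := hp.2.2.2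
        rw [hpe, List.getLast?_append] at h2
        have h3 : (z :: p2).getLast? = some ((z :: p2).getLast (by simp)) :=
          List.getLast?_eq_getLast (by simp)
        rw [h3] at h2 ⊢
        simpa using h2
      have hya : y ≠ a := by
        intro h0
        exact hnd.2.2 hamem (h0 ▸ dp_last_mem hq)
      have hyW : y ∉ c ∧ att y = a := hy.resolve_left hya
      obtain ⟨a', r, hr, ha'c, hsub, huniq⟩ := entry_extract hq ⟨z, by simp, hzc⟩
      have ha'a : a' = a := by
        have h4 := entry_unique hB hc hstrong hyW.1 ⟨ha'c, r, hr, huniq⟩ (hatt y hyW.1)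
        rw [h4, hyW.2]
      exact hnd.2.2 hamem (ha'a ▸ hsub a' (dp_head_mem hr))
    · have hze : IsEntry A c z a := arc_entry harc' ha hzc
      exact hzW hzc (entry_unique hB hc hstrong hzc (hatt z hzc) hze)
  · by_cases hzc : z ∈ c
    · have hze : IsExit A c w z := arc_exit harc hwc hzc
      have h5 : att w = z := entry_eq_exit hB hc (hatt w hwc) hze
      exact hza (h5 ▸ hwa)
    · have hze : IsEntry A c z (att w) := arc_out_entry harc hwz hwc hzc (hatt w hwc)
      have h6 : att z = att w := entry_unique hB hc hstrong hzc (hatt z hzc) hze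
      exact hzW hzc (by rw [h6, hwa])

lemma dp_prefix {x y z : V} {pa pb : List V} (hp : DiPath A x y (pa ++ z :: pb)) :
    DiPath A x z (pa ++ [z]) := by
  have hpe : pa ++ z :: pb = (pa ++ [z]) ++ pb := by simp
  obtain ⟨hch, hnd, hh, hl⟩ := hp
  rw [hpe] at hch hnd hh
  refine ⟨(List.isChain_append.1 hch).1, (List.nodup_append'.1 hnd).1, ?_, List.getLast?_concat⟩
  rw [List.head?_append_of_ne_nil _ (by simp)] at hh
  exact hh

lemma dp_suffix {x y z : V} {pa pb : List V} (hp : DiPath A x y (pa ++ z :: pb)) :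
    DiPath A z y (z :: pb) := by
  obtain ⟨hch, hnd, hh, hl⟩ := hp
  refine ⟨hch.infix (List.IsSuffix.isInfix ⟨pa, rfl⟩), (List.nodup_append'.1 hnd).2.1, rfl, ?_⟩
  rw [List.getLast?_append_of_ne_nil _ (by simp)] at hl
  exact hl

lemma cyc_exists (hstrong : StrongConn A) {x y : V} (hxy : x ≠ y) :
    ∃ c, CycL A c := by
  classical
  have hT : ∃ n, ∃ (x' y' : V) (p q : List V), x' ≠ y' ∧ DiPath A x' y' p ∧
      DiPath A y' x' q ∧ p.length + q.length = n := by
    obtain ⟨p, hp⟩ := hstrong x y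
    obtain ⟨q, hq⟩ := hstrong y x
    exact ⟨p.length + q.length, x, y, p, q, hxy, hp, hq, rfl⟩
  obtain ⟨x', y', p, q, hne, hp, hq, hlen⟩ := Nat.find_spec hT
  have hshare : ∀ z ∈ p, z ∈ q → z = x' ∨ z = y' := by
    intro z hzp hzq
    by_contra hcon
    push_neg at hcon
    obtain ⟨hzx, hzy⟩ := hcon
    obtain ⟨pa, pb, hpe⟩ := List.append_of_mem hzp
    obtain ⟨qa, qb, hqe⟩ := List.append_of_mem hzq
    have hp1 : DiPath A x' z (pa ++ [z]) := dp_prefix (hpe ▸ hp)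
    have hq1 : DiPath A z x' (z :: qb) := dp_suffix (hqe ▸ hq)
    have hpbne : pb ≠ [] := by
      rintro rfl
      have h2 := hp.2.2.2
      rw [hpe, List.getLast?_append_of_ne_nil _ (by simp)] at h2
      exact hzy (by simpa using h2)
    have hlt : (pa ++ [z]).length + (z :: qb).length < Nat.find hT := by
      rw [← hlen, hpe, hqe]
      simp only [List.length_append, List.length_cons, List.length_singleton, List.length_nil]
      have : 1 ≤ pb.length := List.length_pos_iff.2 hpbne
      omega
    exact Nat.find_min hT hlt ⟨x', z, pa ++ [z], z :: qb, fun h => hzx h.symm, hp1, hq1, rfl⟩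
  obtain ⟨mid, hqe⟩ := dp_shape hq hne.symm
  have hqnd := hq.2.1
  rw [hqe, List.nodup_cons, List.nodup_append', List.disjoint_singleton] at hqnd
  obtain ⟨hy'nm, hmidnd, -, hx'nm⟩ := hqnd
  have hmidq : ∀ z ∈ mid, z ∈ q := by
    intro z hz; rw [hqe]; simp [hz]
  have hqch : List.Chain' A (y' :: (mid ++ [x'])) := hqe ▸ hq.1
  refine ⟨p ++ mid, ?_, ?_, ?_, ?_⟩
  · have h2 := dp_length_ge hp hne
    rw [List.length_append]; omega
  · rw [List.Chain', List.isChain_append]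
    refine ⟨hp.1, ?_, ?_⟩
    · refine hqch.infix ?_
      have h3 := List.infix_append [y'] mid [x']
      simpa using h3
    · intro u hu v hv
      rw [hp.2.2.2] at hu
      obtain rfl : y' = u := by simpa using hu
      rw [List.Chain', List.isChain_cons] at hqch
      apply hqch.1
      rw [List.head?_append_of_ne_nil]
      · exact hv
      · rintro rfl; simp at hv
  · rw [List.nodup_append']
    refine ⟨hp.2.1, hmidnd, ?_⟩
    intro z hzp hzm
    rcases hshare z hzp (hmidq z hzm) with rfl | rfl
    · exact hx'nm hzm
    · exact hy'nm (by simp [hzm])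
  · intro u v hu hv
    rw [List.head?_append_of_ne_nil _ (dp_ne_nil hp), hp.2.2.1] at hv
    obtain rfl : x' = v := by simpa using hv
    rcases eq_or_ne mid [] with rfl | hmidne
    · rw [List.append_nil, hp.2.2.2] at hu
      obtain rfl : y' = u := by simpa using hu
      have hch2 : List.Chain' A [y', x'] := by simpa using hqch
      exact (List.isChain_cons_cons.1 hch2).1
    · rw [List.getLast?_append_of_ne_nil _ hmidne] at hu
      have hch2 : List.Chain' A ((y' :: mid) ++ [x']) := by simpa using hqch
      rw [List.Chain', List.isChain_append] at hch2
      refine hch2.2.2 u ?_ x' rfl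
      rw [show y' :: mid = [y'] ++ mid from rfl, List.getLast?_append_of_ne_nil _ hmidne]
      exact hu

lemma internals_map {W' : Type*} (f : V → W') (l : List V) :
    internals (l.map f) = (internals l).map f := by
  simp [internals, List.map_tail, List.map_dropLast]

lemma intdisj_map {W' : Type*} {f : V → W'} (hf : Function.Injective f) {P Q : List V}
    (h : IntDisj P Q) : IntDisj (P.map f) (Q.map f) := by
  constructor
  · intro v hv hv2
    rw [internals_map] at hv hv2
    obtain ⟨w, hw, rfl⟩ := List.mem_map.1 hv
    obtain ⟨w', hw', he⟩ := List.mem_map.1 hv2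
    exact h.1 w hw (hf he ▸ hw')
  · intro v hv hv2
    rw [internals_map] at hv hv2
    obtain ⟨w, hw, rfl⟩ := List.mem_map.1 hv
    obtain ⟨w', hw', he⟩ := List.mem_map.1 hv2
    exact h.2 w hw (hf he ▸ hw')

lemma dp_proj {Q : V → Prop} {x y : {z // Q z}} {p : List {z // Q z}}
    (hp : DiPath (fun u v : {z // Q z} => A u.1 v.1) x y p) :
    DiPath A x.1 y.1 (p.map Subtype.val) := by
  obtain ⟨hch, hnd, hh, hl⟩ := hp
  refine ⟨(List.isChain_map Subtype.val).2 hch, hnd.map Subtype.val_injective, ?_, ?_⟩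
  · rw [List.head?_map, hh]; rfl
  · rw [List.getLast?_map, hl]; rfl

lemma subdivB_proj {Q : V → Prop}
    (h : SubdivB (fun u v : {z // Q z} => A u.1 v.1) 2 1 1) : SubdivB A 2 1 1 := by
  obtain ⟨x, y, P1, P2, P3, h1, h2, h3, hl1, hl2, hl3, hne, d12, d13, d23⟩ := h
  refine ⟨x.1, y.1, P1.map Subtype.val, P2.map Subtype.val, P3.map Subtype.val,
    dp_proj h1, dp_proj h2, dp_proj h3, by simpa using hl1, by simpa using hl2,
    by simpa using hl3, ?_, intdisj_map Subtype.val_injective d12,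
    intdisj_map Subtype.val_injective d13, intdisj_map Subtype.val_injective d23⟩
  intro he
  exact hne (List.map_injective_iff.2 Subtype.val_injective he)

lemma dp_lift {Q : V → Prop} {x y : V} {p : List V} (hp : DiPath A x y p)
    (hQ : ∀ z ∈ p, Q z) (hx : Q x) (hy : Q y) :
    ∃ p' : List {z // Q z},
      DiPath (fun u v : {z // Q z} => A u.1 v.1) ⟨x, hx⟩ ⟨y, hy⟩ p' := by
  refine ⟨p.pmap (fun z hz => (⟨z, hQ z hz⟩ : {z // Q z})) (fun _ h => h), ?_⟩
  set p' : List {z // Q z} := p.pmap (fun z hz => (⟨z, hQ z hz⟩ : {z // Q z})) (fun _ h => h)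
    with hp'def
  have hmap : p'.map Subtype.val = p := by
    rw [hp'def, List.map_pmap]
    exact (List.pmap_eq_map _).trans (List.map_id _)
  have hch := hp.1
  have hnd := hp.2.1
  have hh := hp.2.2.1
  have hl := hp.2.2.2
  rw [← hmap] at hch hnd hh hl
  refine ⟨(List.isChain_map Subtype.val).1 hch, List.Nodup.of_map Subtype.val hnd, ?_, ?_⟩
  · rw [List.head?_map] at hh
    obtain ⟨w, hw, hwx⟩ := Option.map_eq_some_iff.1 hh
    rw [hw]
    congr 1
    exact Subtype.ext hwx
  · rw [List.getLast?_map] at hl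
    obtain ⟨w, hw, hwy⟩ := Option.map_eq_some_iff.1 hl
    rw [hw]
    congr 1
    exact Subtype.ext hwy

lemma nodup_getLast?_cons_ne {a : V} {t : List V} (hnd : (a :: t).Nodup) (ht : t ≠ []) :
    (a :: t).getLast? ≠ some a := by
  intro h0
  have hdecomp := List.dropLast_append_getLast? a h0
  rw [List.dropLast_cons_of_ne_nil ht] at hdecomp
  have h1 : t.dropLast ++ [a] = t := by simpa using hdecomp
  have h2 : a ∈ t := by rw [← h1]; simp
  exact (List.nodup_cons.1 hnd).1 h2

lemma g_proper [DecidableEq V] {c : List V} (hnd : c.Nodup) {u v : V} (huv : u ≠ v)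
    (h : ConsecC c u v) :
    (if c.getLast? = some u then (2 : Fin 3) else ⟨c.idxOf u % 2, by omega⟩) ≠
      (if c.getLast? = some v then (2 : Fin 3) else ⟨c.idxOf v % 2, by omega⟩) := by
  rcases h with ⟨l1, l2, rfl⟩ | ⟨h1, h2⟩
  · have hndsuf : (u :: v :: l2).Nodup := (List.nodup_append'.1 hnd).2.1
    have hdisj := (List.nodup_append'.1 hnd).2.2
    have hunl : (l1 ++ u :: v :: l2).getLast? ≠ some u := by
      rw [List.getLast?_append_of_ne_nil _ (by simp)]
      exact nodup_getLast?_cons_ne hndsuf (by simp)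
    have hul1 : u ∉ l1 := fun hmem => hdisj hmem (by simp)
    have hvl1 : v ∉ l1 := fun hmem => hdisj hmem (by simp)
    have hiu : (l1 ++ u :: v :: l2).idxOf u = l1.length := by
      rw [List.idxOf_append_of_notMem hul1]
      simp [List.idxOf_cons_self]
    have hiv : (l1 ++ u :: v :: l2).idxOf v = l1.length + 1 := by
      rw [List.idxOf_append_of_notMem hvl1]
      rw [List.idxOf_cons_ne _ (show u ≠ v from huv), List.idxOf_cons_self]
    rw [if_neg hunl]; simp only [hiu]
    rcases eq_or_ne l2 [] with rfl | hl2
    · have hvl : (l1 ++ [u, v]).getLast? = some v := by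
        rw [List.getLast?_append_of_ne_nil _ (by simp)]; rfl
      rw [if_pos hvl]
      intro hcon
      rw [Fin.ext_iff] at hcon
      simp at hcon
      omega
    · have hvnl : (l1 ++ u :: v :: l2).getLast? ≠ some v := by
        rw [List.getLast?_append_of_ne_nil _ (by simp), List.getLast?_cons_cons]
        exact nodup_getLast?_cons_ne (List.nodup_cons.1 hndsuf).2 hl2
      rw [if_neg hvnl]; simp only [hiv]
      intro hcon
      rw [Fin.ext_iff] at hcon
      simp at hcon
      omega
  · have hv2 : ¬ (c.getLast? = some v) := by
      intro h0
      rw [h1] at h0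
      exact huv (by simpa using h0)
    rw [if_pos h1, if_neg hv2]
    intro hcon
    rw [Fin.ext_iff] at hcon
    simp at hcon
    omega

end Aux

lemma main_colorable :
    ∀ (n : ℕ) (W : Type u) [Fintype W] (A : W → W → Prop),
      Fintype.card W ≤ n → StrongConn A → ¬ SubdivB A 2 1 1 →
      (SimpleGraph.fromRel A).Colorable 3 := by
  intro n
  induction n with
  | zero =>
    intro W iW A hcard _ _
    have hempty : IsEmpty W := by
      rwa [Nat.le_zero, Fintype.card_eq_zero_iff] at hcard
    exact ⟨SimpleGraph.Coloring.mk (fun w => (hempty.false w).elim)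
      (fun {u v} _ => (hempty.false u).elim)⟩
  | succ n ih =>
    intro W iW A hcard hstrong hB
    classical
    by_cases hsub : ∀ x y : W, x = y
    · exact ⟨SimpleGraph.Coloring.mk (fun _ => 0)
        (fun {u v} hadj => absurd (hsub u v) ((SimpleGraph.fromRel_adj A u v).1 hadj).1)⟩
    · push_neg at hsub
      obtain ⟨x, y, hxy⟩ := hsub
      obtain ⟨c, hc⟩ := cyc_exists hstrong hxy
      have hcne : c ≠ [] := by
        intro h0; rw [h0] at hc; simp [CycL] at hc
      have hattex : ∀ v : W, v ∉ c → ∃ a, IsEntry A c v a :=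
        fun v hv => entry_exists hstrong hcne hv
      set att : W → W := fun v => if h : v ∈ c then v else Classical.choose (hattex v h)
        with hattdef
      have hatt : ∀ v (hv : v ∉ c), IsEntry A c v (att v) := by
        intro v hv
        have h1 : att v = Classical.choose (hattex v hv) := by
          rw [hattdef]; exact dif_neg hv
        rw [h1]
        exact Classical.choose_spec (hattex v hv)
      have hcol : ∀ a, a ∈ c → ∃ col : W → Fin 3,
          ∀ u v, u ≠ v → (A u v ∨ A v u) →
            (u = a ∨ (u ∉ c ∧ att u = a)) → (v = a ∨ (v ∉ c ∧ att v = a)) →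
            col u ≠ col v := by
        intro a ha
        set Q : W → Prop := fun z => z = a ∨ (z ∉ c ∧ att z = a) with hQdef
        have hwit : ∃ b, ¬ Q b := by
          obtain ⟨c1, c2, t, hce⟩ : ∃ c1 c2 t, c = c1 :: c2 :: t := by
            obtain ⟨c1, t1, h1⟩ := List.exists_cons_of_ne_nil hcne
            obtain ⟨c2, t2, h2⟩ := List.exists_cons_of_ne_nil
              (l := t1) (by rintro rfl; rw [h1] at hc; simpa using hc.1)
            exact ⟨c1, c2, t2, by rw [h1, h2]⟩
          rcases eq_or_ne c1 a with rfl | h1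
          · refine ⟨c2, ?_⟩
            rintro (rfl | ⟨hnc, -⟩)
            · have := hc.2.2.1; rw [hce] at this; simp at this
            · exact hnc (by rw [hce]; simp)
          · refine ⟨c1, ?_⟩
            rintro (rfl | ⟨hnc, -⟩)
            · exact h1 rfl
            · exact hnc (by rw [hce]; simp)
        obtain ⟨b, hbQ⟩ := hwit
        have hcard2 : Fintype.card {z // Q z} ≤ n := by
          have h2 := Fintype.card_subtype_lt (p := Q) hbQ
          omega
        have hstrong2 : StrongConn (fun u v : {z // Q z} => A u.1 v.1) := by
          rintro ⟨u, hu⟩ ⟨v, hv⟩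
          obtain ⟨p, hp⟩ := hstrong u v
          have hall : ∀ z ∈ p, z = a ∨ (z ∉ c ∧ att z = a) :=
            stay_lemma hB hc hstrong att (fun w hw => hatt w hw) ha hp hu hv
          obtain ⟨p', hp'⟩ := dp_lift hp hall hu hv
          exact ⟨p', hp'⟩
        have hB2 : ¬ SubdivB (fun u v : {z // Q z} => A u.1 v.1) 2 1 1 :=
          fun h => hB (subdivB_proj h)
        obtain ⟨C⟩ := ih {z // Q z} (fun u v => A u.1 v.1) hcard2 hstrong2 hB2
        refine ⟨fun w => if h : Q w then C ⟨w, h⟩ else 0, ?_⟩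
        intro u v huv harc hQu hQv
        have hQu' : Q u := hQu
        have hQv' : Q v := hQv
        show (if h : Q u then C ⟨u, h⟩ else 0) ≠ (if h : Q v then C ⟨v, h⟩ else 0)
        rw [dif_pos hQu', dif_pos hQv']
        apply C.valid
        rw [SimpleGraph.fromRel_adj]
        exact ⟨fun h => huv (congrArg Subtype.val h), harc⟩
      set colf : W → W → Fin 3 := fun a =>
        if h : a ∈ c then Classical.choose (hcol a h) else fun _ => 0 with hcolfdef
      have hcolf : ∀ a, a ∈ c → ∀ u v, u ≠ v → (A u v ∨ A v u) →
          (u = a ∨ (u ∉ c ∧ att u = a)) → (v = a ∨ (v ∉ c ∧ att v = a)) →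
          colf a u ≠ colf a v := by
        intro a ha
        have h1 : colf a = Classical.choose (hcol a ha) := by
          rw [hcolfdef]; exact dif_pos ha
        rw [h1]
        exact Classical.choose_spec (hcol a ha)
      set g : W → Fin 3 := fun w =>
        if c.getLast? = some w then (2 : Fin 3) else ⟨c.idxOf w % 2, by omega⟩ with hgdef
      have hgproper : ∀ u' v' : W, u' ≠ v' → ConsecC c u' v' → g u' ≠ g v' := by
        intro u' v' h1 h2
        exact g_proper hc.2.2.1 h1 h2
      set σ : W → Equiv.Perm (Fin 3) := fun a => Equiv.swap (colf a a) (g a) with hσdef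
      have hσg : ∀ a, σ a (colf a a) = g a := by
        intro a
        exact Equiv.swap_apply_left _ _
      refine ⟨SimpleGraph.Coloring.mk
        (fun w => if w ∈ c then g w else σ (att w) (colf (att w) w)) ?_⟩
      intro u v hadj
      rw [SimpleGraph.fromRel_adj] at hadj
      obtain ⟨huv, harc⟩ := hadj
      by_cases hu : u ∈ c <;> by_cases hv : v ∈ c
      · rw [if_pos hu, if_pos hv]
        rcases harc with h' | h'
        · exact hgproper u v huv (chord_consec hB hc hu hv huv h')
        · exact (hgproper v u (Ne.symm huv) (chord_consec hB hc hv hu (Ne.symm huv) h')).symm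
      · have hav : att v = u := by
          rcases harc with h' | h'
          · exact entry_unique hB hc hstrong hv (hatt v hv) (arc_entry h' hu hv)
          · exact entry_eq_exit hB hc (hatt v hv) (arc_exit h' hv hu)
        have h1 : colf u u ≠ colf u v :=
          hcolf u hu u v huv harc (Or.inl rfl) (Or.inr ⟨hv, hav⟩)
        rw [if_pos hu, if_neg hv, hav]
        intro hcon
        exact h1 ((σ u).injective ((hσg u).trans hcon))
      · have hau : att u = v := by
          rcases harc with h' | h'
          · exact entry_eq_exit hB hc (hatt u hu) (arc_exit h' hu hv)
          · exact entry_unique hB hc hstrong hu (hatt u hu) (arc_entry h' hv hu)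
        have h1 : colf v u ≠ colf v v :=
          hcolf v hv u v huv harc (Or.inr ⟨hu, hau⟩) (Or.inl rfl)
        rw [if_neg hu, if_pos hv, hau]
        intro hcon
        exact h1 ((σ v).injective (hcon.trans (hσg v).symm))
      · have haeq : att u = att v := by
          rcases harc with h' | h'
          · exact (entry_unique hB hc hstrong hv (hatt v hv)
              (arc_out_entry h' huv hu hv (hatt u hu))).symm
          · exact entry_unique hB hc hstrong hu (hatt u hu)
              (arc_out_entry h' (Ne.symm huv) hv hu (hatt v hv))
        have ha : att u ∈ c := (hatt u hu).1
        have h1 : colf (att u) u ≠ colf (att u) v :=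
          hcolf (att u) ha u v huv harc (Or.inr ⟨hu, rfl⟩) (Or.inr ⟨hv, haeq.symm⟩)
        rw [if_neg hu, if_neg hv, ← haeq]
        intro hcon
        exact h1 ((σ (att u)).injective hcon)



/-- Proposition 11: every strong digraph with chromatic number at least `4`
contains a subdivision of `B(2,1;1)`. -/
theorem stmt8 {V : Type u} [Fintype V] (A : V → V → Prop)
    (hstrong : StrongConn A) (h : (4 : ℕ∞) ≤ dchrom A) :
    SubdivB A 2 1 1 := by
  by_contra hB
  have hcol := main_colorable (Fintype.card V) V A le_rfl hstrong hB
  have hle := hcol.chromaticNumber_le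
  rw [dchrom] at h
  have h4 : (4 : ℕ∞) ≤ ((3 : ℕ) : ℕ∞) := le_trans h hle
  norm_num at h4
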